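/- Let p : ℂ → ℂ be a nonconstant polynomial. Then the set p⁻¹(2cos(πℚ \ πℤ)) = { λ ∈ ℂ : p(λ) = 2cos(πq) for some rational q that is not an integer } is dense in p⁻¹([−2,2]) = { λ ∈ ℂ : p(λ) ∈ [−2,2] }. -/

import Mathlib

open Complex

lemma exists_rat_nonint_btwn {a b : ℝ} (h : a < b) :
    ∃ q : ℚ, q.den ≠ 1 ∧ a < (q : ℝ) ∧ (q : ℝ) < b := by
  obtain ⟨r, hr1, hr2⟩ := exists_rat_btwn h
  by_cases hden : r.den = 1
  · -- r is an integer; perturb by 1/n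
    obtain ⟨n, hn⟩ := exists_nat_gt (max 2 (1 / (b - (r : ℝ))))
    have hn2 : (2 : ℝ) < n := lt_of_le_of_lt (le_max_left _ _) hn
    have hnpos : (0 : ℝ) < n := by linarith
    have hbr : (0 : ℝ) < b - r := by linarith
    have hinv : (1 : ℝ) / n < b - (r : ℝ) := by
      rw [div_lt_iff₀ hnpos]
      have := lt_of_le_of_lt (le_max_right 2 (1 / (b - (r : ℝ)))) hn
      rw [div_lt_iff₀ hbr] at this
      nlinarith
    refine ⟨r + 1 / (n : ℚ), ?_, ?_, ?_⟩
    · intro hq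
      have hnum : ((r + 1 / (n : ℚ)).num : ℚ) = r + 1 / (n : ℚ) :=
        (Rat.den_eq_one_iff _).mp hq
      have hrnum : ((r.num : ℚ)) = r := (Rat.den_eq_one_iff _).mp hden
      have hz : (((r + 1 / (n : ℚ)).num - r.num : ℤ) : ℚ) = 1 / (n : ℚ) := by
        push_cast
        rw [hnum, hrnum]; ring
      have hnQ : (0 : ℚ) < (n : ℚ) := by exact_mod_cast (by exact_mod_cast hnpos : (0:ℝ) < n)
      have h1 : (0 : ℚ) < (((r + 1 / (n : ℚ)).num - r.num : ℤ) : ℚ) := by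
        rw [hz]; positivity
      have h2 : (((r + 1 / (n : ℚ)).num - r.num : ℤ) : ℚ) < 1 := by
        rw [hz, div_lt_one hnQ]
        have : (1:ℚ) < (n:ℚ) := by exact_mod_cast (by linarith : (1:ℝ) < n)
        exact this
      have h1' : 0 < (r + 1 / (n : ℚ)).num - r.num := by exact_mod_cast h1
      have h2' : (r + 1 / (n : ℚ)).num - r.num < 1 := by exact_mod_cast h2
      omega
    · push_cast
      have : (0:ℝ) < 1 / (n:ℝ) := by positivity
      linarith
    · push_cast
      linarith
  · exact ⟨r, hden, hr1, hr2⟩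

lemma exists_cos_rat_close {x : ℝ} (hx : x ∈ Set.Icc (-2 : ℝ) 2) {δ : ℝ} (hδ : 0 < δ) :
    ∃ q : ℚ, q.den ≠ 1 ∧ |2 * Real.cos (Real.pi * q) - x| < δ := by
  set f : ℝ → ℝ := fun t => 2 * Real.cos (Real.pi * t) with hf
  have hcont : Continuous f := by
    continuity
  set t : ℝ := Real.arccos (x / 2) / Real.pi with ht
  have hπ : Real.pi ≠ 0 := Real.pi_ne_zero
  have hft : f t = x := by
    have : Real.pi * t = Real.arccos (x / 2) := by
      rw [ht]; field_simp
    rw [hf]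
    simp only [this]
    rw [Real.cos_arccos (by linarith [hx.1]) (by linarith [hx.2])]
    ring
  have := Metric.continuous_iff.mp hcont t δ hδ
  obtain ⟨η, hη, hball⟩ := this
  obtain ⟨q, hq, hq1, hq2⟩ := exists_rat_nonint_btwn (show t - η < t + η by linarith)
  refine ⟨q, hq, ?_⟩
  have : dist ((q : ℝ)) t < η := by
    rw [Real.dist_eq, abs_lt]; constructor <;> linarith
  have := hball _ this
  rw [Real.dist_eq, hft] at this
  exact this

theorem preimage_cos_rational_dense (p : Polynomial ℂ) (hp : 0 < p.natDegree) :
    {lam : ℂ | ∃ q : ℚ, q.den ≠ 1 ∧ p.eval lam = ((2 * Real.cos (Real.pi * q) : ℝ) : ℂ)} ⊆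
      {lam : ℂ | ∃ x ∈ Set.Icc (-2 : ℝ) 2, p.eval lam = (x : ℂ)} ∧
    {lam : ℂ | ∃ x ∈ Set.Icc (-2 : ℝ) 2, p.eval lam = (x : ℂ)} ⊆
      closure {lam : ℂ | ∃ q : ℚ, q.den ≠ 1 ∧
        p.eval lam = ((2 * Real.cos (Real.pi * q) : ℝ) : ℂ)} := by
  have hdeg : 0 < p.degree := Polynomial.natDegree_pos_iff_degree_pos.mp hp
  -- p.eval is an open map
  have hA : AnalyticOnNhd ℂ (fun z => p.eval z) Set.univ :=
    (p.differentiable.differentiableOn).analyticOnNhd isOpen_univ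
  have hopen : ∀ s : Set ℂ, IsOpen s → IsOpen ((fun z => p.eval z) '' s) := by
    rcases hA.is_constant_or_isOpen isPreconnected_univ with ⟨w, hw⟩ | h
    · exfalso
      obtain ⟨z₀, hz₀⟩ := Complex.exists_root (f := p - Polynomial.C (w + 1))
        (by rwa [Polynomial.degree_sub_C hdeg])
      have h0 : p.eval z₀ = w + 1 := by
        have := hz₀
        simp [Polynomial.IsRoot, Polynomial.eval_sub, Polynomial.eval_C, sub_eq_zero] at this
        exact this
      have h1 : p.eval z₀ = w := hw z₀ (Set.mem_univ _)
      rw [h1] at h0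
      exact one_ne_zero (by linear_combination -h0)
    · exact fun s hs => h s (Set.subset_univ s) hs
  constructor
  · rintro lam ⟨q, hq, heq⟩
    refine ⟨2 * Real.cos (Real.pi * q), ⟨?_, ?_⟩, heq⟩
    · nlinarith [Real.neg_one_le_cos (Real.pi * q)]
    · nlinarith [Real.cos_le_one (Real.pi * q)]
  · rintro lam ⟨x, hx, heq⟩
    rw [Metric.mem_closure_iff]
    intro ε hε
    have hball : IsOpen ((fun z => p.eval z) '' Metric.ball lam ε) :=
      hopen _ Metric.isOpen_ball
    have hmem : ((x : ℝ) : ℂ) ∈ (fun z => p.eval z) '' Metric.ball lam ε :=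
      ⟨lam, Metric.mem_ball_self hε, heq⟩
    obtain ⟨δ, hδ, hsub⟩ := Metric.isOpen_iff.mp hball _ hmem
    obtain ⟨q, hq, hqclose⟩ := exists_cos_rat_close hx hδ
    have hmem2 : ((2 * Real.cos (Real.pi * q) : ℝ) : ℂ) ∈ Metric.ball ((x : ℝ) : ℂ) δ := by
      rw [Metric.mem_ball, Complex.dist_eq, ← Complex.ofReal_sub, Complex.norm_real, Real.norm_eq_abs]
      exact hqclose
    obtain ⟨μ, hμball, hμeq⟩ := hsub hmem2
    exact ⟨μ, ⟨q, hq, hμeq⟩, by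
      rw [dist_comm]
      exact Metric.mem_ball.mp hμball⟩
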